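/- Consider the perturbed consensus iteration x^{(t+1)} = A^{(t)} x^{(t)} + ξ^{(t)} in ℝ^N, where each A^{(t)} is row-stochastic with all entries at least δ ∈ (0, 1/2], and the range of each perturbation satisfies range(ξ^{(t)}) → 0 as t → ∞ (range(v) := max_i v_i − min_i v_i). Then range(x^{(t)}) → 0, i.e., all coordinates reach consensus: |x_i^{(t)} − x_j^{(t)}| → 0 for all i, j. -/

import Mathlib

open Filter

/-- If `u (n+1) ≤ c * u n + e n` with `0 ≤ c < 1`, `0 ≤ u`, and `e → 0`, then `u → 0`. -/
lemma tendsto_zero_of_contract (u e : ℕ → ℝ) (c : ℝ) (hc0 : 0 ≤ c) (hc1 : c < 1)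
    (hu : ∀ n, 0 ≤ u n) (hrec : ∀ n, u (n + 1) ≤ c * u n + e n)
    (he : Tendsto e atTop (nhds 0)) : Tendsto u atTop (nhds 0) := by
  rw [Metric.tendsto_atTop]
  intro ε hε
  have hε' : 0 < (1 - c) * ε / 2 := by nlinarith
  obtain ⟨T, hT⟩ := (Metric.tendsto_atTop.mp he) ((1 - c) * ε / 2) hε'
  have hTe : ∀ t ≥ T, e t ≤ (1 - c) * ε / 2 := by
    intro t ht
    have := hT t ht
    rw [Real.dist_eq, sub_zero] at this
    exact (abs_lt.mp this).2.le
  -- induction bound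
  have key : ∀ n, u (T + n) ≤ c ^ n * u T + ε / 2 := by
    intro n
    induction n with
    | zero => simp; nlinarith [hu T]
    | succ n ih =>
      have h1 : u (T + (n + 1)) ≤ c * u (T + n) + e (T + n) := by
        have := hrec (T + n); simpa [Nat.add_assoc] using this
      have h2 : e (T + n) ≤ (1 - c) * ε / 2 := hTe _ (Nat.le_add_right _ _)
      calc u (T + (n + 1)) ≤ c * u (T + n) + e (T + n) := h1
        _ ≤ c * (c ^ n * u T + ε / 2) + (1 - c) * ε / 2 := by
            have := mul_le_mul_of_nonneg_left ih hc0
            linarith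
        _ ≤ c ^ (n + 1) * u T + ε / 2 := by ring_nf; nlinarith
  -- geometric part tends to 0
  have hgeo : Tendsto (fun n => c ^ n * u T) atTop (nhds 0) := by
    have := tendsto_pow_atTop_nhds_zero_of_lt_one hc0 hc1
    simpa using this.mul_const (u T)
  obtain ⟨M, hM⟩ := (Metric.tendsto_atTop.mp hgeo) (ε / 2) (by positivity)
  refine ⟨T + M, fun t ht => ?_⟩
  have hn : T + (t - T) = t := by omega
  have h1 : u t ≤ c ^ (t - T) * u T + ε / 2 := by
    have := key (t - T); rwa [hn] at this
  have h2 : c ^ (t - T) * u T < ε / 2 := by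
    have := hM (t - T) (by omega)
    rw [Real.dist_eq, sub_zero] at this
    exact lt_of_abs_lt this
  rw [Real.dist_eq, sub_zero, abs_of_nonneg (hu t)]
  linarith

/-- Contraction of the range under a row-stochastic matrix with entries `≥ δ ≥ 0`. -/
lemma range_mulVec_contract {N : ℕ} (hne : (Finset.univ : Finset (Fin N)).Nonempty)
    (A : Matrix (Fin N) (Fin N) ℝ) (v : Fin N → ℝ) (δ : ℝ) (hδ0 : 0 ≤ δ)
    (hlow : ∀ i k, δ ≤ A i k) (hrow : ∀ i, ∑ k, A i k = 1) :
    Finset.univ.sup' hne (A.mulVec v) - Finset.univ.inf' hne (A.mulVec v)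
      ≤ (1 - 2 * δ) * (Finset.univ.sup' hne v - Finset.univ.inf' hne v) := by
  set M := Finset.univ.sup' hne v with hM
  set m := Finset.univ.inf' hne v with hm
  have hmM : m ≤ M := by
    obtain ⟨i, _⟩ := hne
    exact le_trans (Finset.inf'_le _ (Finset.mem_univ i)) (Finset.le_sup' _ (Finset.mem_univ i))
  obtain ⟨k0, _, hk0⟩ := Finset.exists_mem_eq_inf' hne v
  obtain ⟨k1, _, hk1⟩ := Finset.exists_mem_eq_sup' hne v
  have hvle : ∀ k, v k ≤ M := fun k => Finset.le_sup' _ (Finset.mem_univ k)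
  have hvge : ∀ k, m ≤ v k := fun k => Finset.inf'_le _ (Finset.mem_univ k)
  have hAnn : ∀ i k, (0:ℝ) ≤ A i k := fun i k => le_trans hδ0 (hlow i k)
  have hupper : ∀ i, A.mulVec v i ≤ M - δ * (M - m) := by
    intro i
    have step1 : A.mulVec v i ≤ ∑ k, A i k * (if k = k0 then m else M) := by
      unfold Matrix.mulVec dotProduct
      apply Finset.sum_le_sum
      intro k _
      by_cases hk : k = k0
      · subst hk; simp [← hk0, hm]
      · simp only [hk, if_false]
        exact mul_le_mul_of_nonneg_left (hvle k) (hAnn i k)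
    have step2 : ∑ k, A i k * (if k = k0 then m else M) = M + A i k0 * (m - M) := by
      have : ∀ k, A i k * (if k = k0 then m else M)
          = A i k * M + (if k = k0 then A i k0 * (m - M) else 0) := by
        intro k
        by_cases hk : k = k0
        · subst hk; simp; ring
        · simp [hk]
      rw [Finset.sum_congr rfl (fun k _ => this k), Finset.sum_add_distrib,
        Finset.sum_ite_eq' Finset.univ k0 (fun _ => A i k0 * (m - M)),
        ← Finset.sum_mul, hrow i]
      simp
    have step3 : A i k0 * (m - M) ≤ δ * (m - M) := by
      have := hlow i k0
      nlinarith
    calc A.mulVec v i ≤ M + A i k0 * (m - M) := step1.trans step2.le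
      _ ≤ M + δ * (m - M) := by linarith
      _ = M - δ * (M - m) := by ring
  have hlower : ∀ i, m + δ * (M - m) ≤ A.mulVec v i := by
    intro i
    have step1 : ∑ k, A i k * (if k = k1 then M else m) ≤ A.mulVec v i := by
      unfold Matrix.mulVec dotProduct
      apply Finset.sum_le_sum
      intro k _
      by_cases hk : k = k1
      · subst hk; simp [← hk1, hM]
      · simp only [hk, if_false]
        exact mul_le_mul_of_nonneg_left (hvge k) (hAnn i k)
    have step2 : ∑ k, A i k * (if k = k1 then M else m) = m + A i k1 * (M - m) := by
      have : ∀ k, A i k * (if k = k1 then M else m)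
          = A i k * m + (if k = k1 then A i k1 * (M - m) else 0) := by
        intro k
        by_cases hk : k = k1
        · subst hk; simp; ring
        · simp [hk]
      rw [Finset.sum_congr rfl (fun k _ => this k), Finset.sum_add_distrib,
        Finset.sum_ite_eq' Finset.univ k1 (fun _ => A i k1 * (M - m)),
        ← Finset.sum_mul, hrow i]
      simp
    have step3 : δ * (M - m) ≤ A i k1 * (M - m) := by
      have := hlow i k1
      nlinarith
    calc m + δ * (M - m) ≤ m + A i k1 * (M - m) := by linarith
      _ = ∑ k, A i k * (if k = k1 then M else m) := step2.symm
      _ ≤ A.mulVec v i := step1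
  have hsup : Finset.univ.sup' hne (A.mulVec v) ≤ M - δ * (M - m) :=
    Finset.sup'_le _ _ (fun i _ => hupper i)
  have hinf : m + δ * (M - m) ≤ Finset.univ.inf' hne (A.mulVec v) :=
    Finset.le_inf' _ _ (fun i _ => hlower i)
  linarith

theorem perturbed_consensus_iteration_reaches_consensus
    {N : ℕ} (hne : (Finset.univ : Finset (Fin N)).Nonempty)
    (A : ℕ → Matrix (Fin N) (Fin N) ℝ)
    (x ξ : ℕ → Fin N → ℝ) (δ : ℝ)
    (hδ : 0 < δ) (hδ2 : δ ≤ 1 / 2)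
    (hlow : ∀ t i k, δ ≤ A t i k)
    (hrow : ∀ t i, ∑ k, A t i k = 1)
    (hupd : ∀ t, x (t + 1) = (A t).mulVec (x t) + ξ t)
    (hξ : Tendsto (fun t => Finset.univ.sup' hne (ξ t) - Finset.univ.inf' hne (ξ t))
            atTop (nhds 0)) :
    Tendsto (fun t => Finset.univ.sup' hne (x t) - Finset.univ.inf' hne (x t))
      atTop (nhds 0) ∧
    ∀ i j, Tendsto (fun t => |x t i - x t j|) atTop (nhds 0) := by
  set r : ℕ → ℝ := fun t => Finset.univ.sup' hne (x t) - Finset.univ.inf' hne (x t) with hr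
  set e : ℕ → ℝ := fun t => Finset.univ.sup' hne (ξ t) - Finset.univ.inf' hne (ξ t) with he
  have hrnn : ∀ t, 0 ≤ r t := by
    intro t
    obtain ⟨i, _⟩ := hne
    have := le_trans (Finset.inf'_le (x t) (Finset.mem_univ i))
      (Finset.le_sup' (x t) (Finset.mem_univ i))
    simp only [hr]; linarith
  have hrec : ∀ t, r (t + 1) ≤ (1 - 2 * δ) * r t + e t := by
    intro t
    have hxs := hupd t
    have hsup : Finset.univ.sup' hne (x (t + 1))
        ≤ Finset.univ.sup' hne ((A t).mulVec (x t)) + Finset.univ.sup' hne (ξ t) := by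
      apply Finset.sup'_le
      intro i _
      rw [hxs]
      exact add_le_add (Finset.le_sup' _ (Finset.mem_univ i))
        (Finset.le_sup' _ (Finset.mem_univ i))
    have hinf : Finset.univ.inf' hne ((A t).mulVec (x t)) + Finset.univ.inf' hne (ξ t)
        ≤ Finset.univ.inf' hne (x (t + 1)) := by
      apply Finset.le_inf'
      intro i _
      rw [hxs]
      exact add_le_add (Finset.inf'_le _ (Finset.mem_univ i))
        (Finset.inf'_le _ (Finset.mem_univ i))
    have hc := range_mulVec_contract hne (A t) (x t) δ hδ.le (hlow t) (hrow t)
    simp only [hr, he]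
    linarith
  have hmain : Tendsto r atTop (nhds 0) :=
    tendsto_zero_of_contract r e (1 - 2 * δ) (by linarith) (by linarith) hrnn hrec hξ
  refine ⟨hmain, fun i j => ?_⟩
  apply squeeze_zero (fun t => abs_nonneg _) (g := r) _ hmain
  intro t
  rw [abs_sub_le_iff]
  constructor
  · have h1 := Finset.le_sup' (x t) (Finset.mem_univ i)
    have h2 := Finset.inf'_le (x t) (Finset.mem_univ j)
    simp only [hr]; linarith
  · have h1 := Finset.le_sup' (x t) (Finset.mem_univ j)
    have h2 := Finset.inf'_le (x t) (Finset.mem_univ i)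
    simp only [hr]; linarith
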